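/- Let Φ : M_k(ℂ) → M_n(ℂ) be a unital positive linear map and p ∈ (0,1]. Then the map A ↦ Tr[Φ(A^p)^{-1/p}] on positive definite matrices is convex. -/

import Mathlib

set_option linter.unusedSectionVars false
set_option maxHeartbeats 1000000


open scoped ComplexOrder Kronecker

/-- Matrix power via the continuous functional calculus. -/
noncomputable def mpow {n : Type*} [Fintype n] [DecidableEq n]
    (A : Matrix n n ℂ) (p : ℝ) : Matrix n n ℂ :=
  cfc (fun x : ℝ => x ^ p) A

/-- The Loewner order on matrices. -/
def LoewnerLE {n : Type*} [Fintype n] (A B : Matrix n n ℂ) : Prop :=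
  (B - A).PosSemidef

/-- The matrix geometric mean `A # B = A^{1/2}(A^{-1/2} B A^{-1/2})^{1/2} A^{1/2}`. -/
noncomputable def geo {n : Type*} [Fintype n] [DecidableEq n]
    (A B : Matrix n n ℂ) : Matrix n n ℂ :=
  mpow A (1/2) * mpow (mpow A (-(1/2)) * B * mpow A (-(1/2))) (1/2) * mpow A (1/2)

/-- The generalized Kantorovich constant. -/
noncomputable def Kconst (h p : ℝ) : ℝ :=
  ((h ^ p - h) / ((p - 1) * (h - 1))) *
    (((p - 1) / p) * ((h ^ p - 1) / (h ^ p - h))) ^ p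

/-- The Specht ratio. -/
noncomputable def Specht (h : ℝ) : ℝ :=
  if h = 1 then 1 else (h - 1) * h ^ (1 / (h - 1)) / (Real.exp 1 * Real.log h)


open Matrix MeasureTheory Set

namespace TPaux

variable {n : Type*} [Fintype n] [DecidableEq n]

/-! ### quadratic form basics -/

noncomputable def rq (M : Matrix n n ℂ) (x : n → ℂ) : ℝ := (star x ⬝ᵥ M *ᵥ x).re

lemma rq_add (M N : Matrix n n ℂ) (x : n → ℂ) : rq (M + N) x = rq M x + rq N x := by
  simp [rq, add_mulVec, dotProduct_add]

lemma rq_sub (M N : Matrix n n ℂ) (x : n → ℂ) : rq (M - N) x = rq M x - rq N x := by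
  simp [rq, sub_mulVec, dotProduct_sub]

lemma rq_smul (r : ℝ) (M : Matrix n n ℂ) (x : n → ℂ) :
    rq ((r : ℂ) • M) x = r * rq M x := by
  simp [rq, smul_mulVec, dotProduct_smul, Complex.mul_re]

lemma rq_nonneg {M : Matrix n n ℂ} (hM : M.PosSemidef) (x : n → ℂ) : 0 ≤ rq M x := by
  simpa [rq] using hM.re_dotProduct_nonneg x

lemma rq_pos {M : Matrix n n ℂ} (hM : M.PosDef) {x : n → ℂ} (hx : x ≠ 0) : 0 < rq M x := by
  simpa [rq] using hM.re_dotProduct_pos hx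

lemma dot_star_self (x : n → ℂ) :
    star x ⬝ᵥ x = ((∑ j, ‖x j‖ ^ 2 : ℝ) : ℂ) := by
  simp only [dotProduct, Pi.star_apply]
  push_cast
  congr 1; ext j
  rw [← Complex.ofReal_pow, ← Complex.normSq_eq_norm_sq, Complex.normSq_eq_conj_mul_self]
  rfl

/-! ### spectral quadratic forms -/

lemma quad_conj (V : Matrix n n ℂ) (g : n → ℝ) (x : n → ℂ) :
    star x ⬝ᵥ (V * diagonal (Complex.ofReal ∘ g) * Vᴴ) *ᵥ x
      = ((∑ j, g j * ‖(Vᴴ *ᵥ x) j‖ ^ 2 : ℝ) : ℂ) := by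
  set y := Vᴴ *ᵥ x with hy
  have h1 : (V * diagonal (Complex.ofReal ∘ g) * Vᴴ) *ᵥ x
      = V *ᵥ (diagonal (Complex.ofReal ∘ g) *ᵥ y) := by
    simp [hy, mulVec_mulVec, Matrix.mul_assoc]
  rw [h1]
  have h2 : star x ⬝ᵥ V *ᵥ (diagonal (Complex.ofReal ∘ g) *ᵥ y)
      = star y ⬝ᵥ (diagonal (Complex.ofReal ∘ g) *ᵥ y) := by
    rw [dotProduct_mulVec, hy]
    congr 1
    rw [star_mulVec, conjTranspose_conjTranspose]
  rw [h2]
  simp only [mulVec_diagonal, dotProduct, Pi.star_apply, Function.comp_apply]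
  push_cast
  congr 1
  ext j
  have : (starRingEnd ℂ) (y j) * ((g j : ℂ) * y j) = (g j : ℂ) * (‖y j‖^2 : ℝ) := by
    rw [← Complex.normSq_eq_norm_sq]
    push_cast [Complex.normSq_eq_conj_mul_self]
    ring
  simpa using this

lemma cfc_eq_conj {M : Matrix n n ℂ} (hM : M.IsHermitian) (f : ℝ → ℝ) :
    cfc f M = (hM.eigenvectorUnitary : Matrix n n ℂ)
      * diagonal (Complex.ofReal ∘ f ∘ hM.eigenvalues)
      * (hM.eigenvectorUnitary : Matrix n n ℂ)ᴴ := by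
  rw [hM.cfc_eq, Matrix.IsHermitian.cfc, Unitary.conjStarAlgAut_apply, star_eq_conjTranspose]
  rfl

/-- weights of `x` in the eigenbasis of `M` -/
noncomputable def wv {M : Matrix n n ℂ} (hM : M.IsHermitian) (x : n → ℂ) : n → ℝ :=
  fun j => ‖((hM.eigenvectorUnitary : Matrix n n ℂ)ᴴ *ᵥ x) j‖ ^ 2

lemma wv_nonneg {M : Matrix n n ℂ} (hM : M.IsHermitian) (x : n → ℂ) (j : n) :
    0 ≤ wv hM x j := by unfold wv; positivity

lemma quad_cfc {M : Matrix n n ℂ} (hM : M.IsHermitian) (f : ℝ → ℝ) (x : n → ℂ) :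
    star x ⬝ᵥ (cfc f M) *ᵥ x = ((∑ j, f (hM.eigenvalues j) * wv hM x j : ℝ) : ℂ) := by
  rw [cfc_eq_conj hM f]
  exact quad_conj _ _ x

lemma rq_cfc {M : Matrix n n ℂ} (hM : M.IsHermitian) (f : ℝ → ℝ) (x : n → ℂ) :
    rq (cfc f M) x = ∑ j, f (hM.eigenvalues j) * wv hM x j := by
  rw [rq, quad_cfc hM f x, Complex.ofReal_re]

lemma trace_cfc_re {M : Matrix n n ℂ} (hM : M.IsHermitian) (f : ℝ → ℝ) :
    (cfc f M).trace.re = ∑ j, f (hM.eigenvalues j) := by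
  rw [cfc_eq_conj hM f, Matrix.trace_mul_cycle]
  have h1 : (↑hM.eigenvectorUnitary)ᴴ * (↑hM.eigenvectorUnitary : Matrix n n ℂ) = 1 := by
    rw [← star_eq_conjTranspose]
    exact Unitary.star_mul_self_of_mem hM.eigenvectorUnitary.2
  rw [h1, Matrix.one_mul, Matrix.trace_diagonal]
  have : ∑ i, (Complex.ofReal ∘ f ∘ hM.eigenvalues) i
      = ((∑ i, f (hM.eigenvalues i) : ℝ) : ℂ) := by push_cast; rfl
  rw [this, Complex.ofReal_re]

lemma sum_wv {M : Matrix n n ℂ} (hM : M.IsHermitian) (x : n → ℂ) :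
    ∑ j, wv hM x j = ∑ j, ‖x j‖ ^ 2 := by
  have h := quad_cfc hM (fun _ => 1) x
  rw [cfc_const_one ℝ M hM.isSelfAdjoint, Matrix.one_mulVec, dot_star_self] at h
  have := Complex.ofReal_injective h
  simpa using this.symm

lemma rq_self {M : Matrix n n ℂ} (hM : M.IsHermitian) (x : n → ℂ) :
    rq M x = ∑ j, hM.eigenvalues j * wv hM x j := by
  conv_lhs => rw [← cfc_id' ℝ M hM.isSelfAdjoint]
  exact rq_cfc hM _ x

lemma quad_real {M : Matrix n n ℂ} (hM : M.IsHermitian) (x : n → ℂ) :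
    star x ⬝ᵥ M *ᵥ x = ((rq M x : ℝ) : ℂ) := by
  conv_lhs => rw [← cfc_id' ℝ M hM.isSelfAdjoint]
  rw [quad_cfc hM _ x, rq_self hM x]

lemma isHermitian_of_sa {M : Matrix n n ℂ} (h : IsSelfAdjoint M) : M.IsHermitian := h

lemma posSemidef_of_rq {M : Matrix n n ℂ} (hM : M.IsHermitian)
    (h : ∀ x, 0 ≤ rq M x) : M.PosSemidef := by
  refine Matrix.PosSemidef.of_dotProduct_mulVec_nonneg hM fun x => ?_
  rw [quad_real hM x]
  exact Complex.zero_le_real.mpr (h x)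

lemma posDef_of_rq {M : Matrix n n ℂ} (hM : M.IsHermitian)
    (h : ∀ x, x ≠ 0 → 0 < rq M x) : M.PosDef := by
  refine Matrix.PosDef.of_dotProduct_mulVec_pos hM fun x hx => ?_
  rw [quad_real hM x]
  exact Complex.zero_lt_real.mpr (h x hx)

lemma wv_sum_pos {M : Matrix n n ℂ} (hM : M.IsHermitian) {x : n → ℂ} (hx : x ≠ 0) :
    0 < ∑ j, wv hM x j := by
  rw [sum_wv hM x]
  have : ∃ j, x j ≠ 0 := by
    by_contra h
    push_neg at h
    exact hx (funext h)
  obtain ⟨j, hj⟩ := this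
  refine Finset.sum_pos' (fun i _ => by positivity) ⟨j, Finset.mem_univ j, by simp [norm_pos_iff, pow_pos, hj]⟩

lemma cfc_posDef {M : Matrix n n ℂ} (hM : M.PosDef) {f : ℝ → ℝ}
    (hf : ∀ j, 0 < f (hM.1.eigenvalues j)) : (cfc f M).PosDef := by
  refine posDef_of_rq (isHermitian_of_sa (cfc_predicate f M)) fun x hx => ?_
  rw [rq_cfc hM.1 f x]
  have h0 := wv_sum_pos hM.1 hx
  have : ∃ j, 0 < wv hM.1 x j := by
    by_contra h
    push_neg at h
    have : ∑ j, wv hM.1 x j ≤ 0 :=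
      Finset.sum_nonpos fun j _ => h j
    linarith
  obtain ⟨j, hj⟩ := this
  refine Finset.sum_pos' (fun i _ => mul_nonneg (hf i).le (wv_nonneg _ _ _))
    ⟨j, Finset.mem_univ j, mul_pos (hf j) hj⟩

lemma cfc_posSemidef {M : Matrix n n ℂ} (hM : M.IsHermitian) {f : ℝ → ℝ}
    (hf : ∀ j, 0 ≤ f (hM.eigenvalues j)) : (cfc f M).PosSemidef := by
  refine posSemidef_of_rq (isHermitian_of_sa (cfc_predicate f M)) fun x => ?_
  rw [rq_cfc hM f x]
  exact Finset.sum_nonneg fun j _ => mul_nonneg (hf j) (wv_nonneg _ _ _)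


/-! ### smul and hermitian helpers -/

lemma real_smul_matrix (r : ℝ) (M : Matrix n n ℂ) : r • M = (r : ℂ) • M := by
  ext i j
  simp [Complex.real_smul]

lemma herm_smul {M : Matrix n n ℂ} (r : ℝ) (hM : M.IsHermitian) :
    ((r : ℂ) • M).IsHermitian := by
  rw [Matrix.IsHermitian, Matrix.conjTranspose_smul, hM.eq]
  simp

lemma psd_smul {M : Matrix n n ℂ} (hM : M.PosSemidef) {r : ℝ} (hr : 0 ≤ r) :
    ((r : ℂ) • M).PosSemidef := by
  refine posSemidef_of_rq (herm_smul r hM.1) fun x => ?_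
  rw [rq_smul]
  exact mul_nonneg hr (rq_nonneg hM x)

lemma sum_norm_pos {x : n → ℂ} (hx : x ≠ 0) : 0 < ∑ j, ‖x j‖ ^ 2 := by
  have : ∃ j, x j ≠ 0 := by
    by_contra h
    push_neg at h
    exact hx (funext h)
  obtain ⟨j, hj⟩ := this
  exact Finset.sum_pos' (fun i _ => by positivity)
    ⟨j, Finset.mem_univ j, by simp [pow_pos, norm_pos_iff, hj]⟩

lemma rq_one (x : n → ℂ) : rq 1 x = ∑ j, ‖x j‖ ^ 2 := by
  rw [rq, Matrix.one_mulVec, dot_star_self, Complex.ofReal_re]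

lemma smul_one_posDef {r : ℝ} (hr : 0 < r) : ((r : ℂ) • (1 : Matrix n n ℂ)).PosDef := by
  refine posDef_of_rq (herm_smul r Matrix.isHermitian_one) fun x hx => ?_
  rw [rq_smul, rq_one]
  exact mul_pos hr (sum_norm_pos hx)

/-! ### convexity of the inverse -/

lemma inv_ge_tangent {P Y : Matrix n n ℂ} (hP : P.PosDef) (hY : Y.IsHermitian) :
    (P⁻¹ + Y * P * Y - (Y + Y)).PosSemidef := by
  have hdet : IsUnit P.det := (Matrix.isUnit_iff_isUnit_det P).mp hP.isUnit
  have hPP : P * P⁻¹ = 1 := Matrix.mul_nonsing_inv P hdet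
  have hP'P : P⁻¹ * P = 1 := Matrix.nonsing_inv_mul P hdet
  have hPiH : P⁻¹.IsHermitian := hP.posSemidef.inv.1
  have key : (Y - P⁻¹)ᴴ * P * (Y - P⁻¹) = P⁻¹ + Y * P * Y - (Y + Y) := by
    rw [Matrix.conjTranspose_sub, hY.eq, hPiH.eq]
    calc (Y - P⁻¹) * P * (Y - P⁻¹)
        = Y * P * Y - Y * (P * P⁻¹) - P⁻¹ * P * Y + P⁻¹ * P * P⁻¹ := by
          simp only [Matrix.sub_mul, Matrix.mul_sub, Matrix.mul_assoc]
          abel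
      _ = P⁻¹ + Y * P * Y - (Y + Y) := by
          rw [hPP, hP'P, Matrix.mul_one, Matrix.one_mul, Matrix.one_mul]
          abel
  rw [← key]
  exact hP.posSemidef.conjTranspose_mul_mul_same _

lemma inv_convex {P Q S : Matrix n n ℂ} (hP : P.PosDef) (hQ : Q.PosDef) {a b : ℝ}
    (ha : 0 ≤ a) (hb : 0 ≤ b) (hab : a + b = 1)
    (hSdef : S = (a : ℂ) • P + (b : ℂ) • Q) (hS : S.PosDef) :
    ((a : ℂ) • P⁻¹ + (b : ℂ) • Q⁻¹ - S⁻¹).PosSemidef := by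
  have hSdet : IsUnit S.det := (Matrix.isUnit_iff_isUnit_det S).mp hS.isUnit
  set Y := S⁻¹ with hYdef
  have hY : Y.IsHermitian := hS.posSemidef.inv.1
  have t1 := inv_ge_tangent hP hY
  have t2 := inv_ge_tangent hQ hY
  have combo := (psd_smul t1 ha).add (psd_smul t2 hb)
  have hYS : Y * S * Y = Y := by
    rw [hYdef, Matrix.nonsing_inv_mul S hSdet, Matrix.one_mul]
  have h2 : (a : ℂ) • (Y * P * Y) + (b : ℂ) • (Y * Q * Y) = Y := by
    calc (a : ℂ) • (Y * P * Y) + (b : ℂ) • (Y * Q * Y)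
        = Y * ((a : ℂ) • P + (b : ℂ) • Q) * Y := by
          simp only [Matrix.mul_add, Matrix.add_mul, Matrix.mul_smul, Matrix.smul_mul]
      _ = Y := by rw [← hSdef, hYS]
  have hab' : (a : ℂ) + (b : ℂ) = 1 := by
    rw [← Complex.ofReal_add, hab, Complex.ofReal_one]
  have hsum : (a : ℂ) • (P⁻¹ + Y * P * Y - (Y + Y)) + (b : ℂ) • (Q⁻¹ + Y * Q * Y - (Y + Y))
      = (a : ℂ) • P⁻¹ + (b : ℂ) • Q⁻¹ - S⁻¹ := by
    have expand : (a : ℂ) • (P⁻¹ + Y * P * Y - (Y + Y)) + (b : ℂ) • (Q⁻¹ + Y * Q * Y - (Y + Y))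
        = ((a : ℂ) • P⁻¹ + (b : ℂ) • Q⁻¹)
          + ((a : ℂ) • (Y * P * Y) + (b : ℂ) • (Y * Q * Y))
          - ((a : ℂ) + (b : ℂ)) • (Y + Y) := by
      simp only [smul_sub, smul_add, add_smul]
      abel
    rw [expand, h2, hab', one_smul, ← hYdef]
    abel
  rw [← hsum]
  exact combo

/-! ### shifted inverses via cfc -/

lemma contOn (f : ℝ → ℝ) (M : Matrix n n ℂ) : ContinuousOn f (spectrum ℝ M) :=
  Matrix.finite_real_spectrum.continuousOn f

lemma shift_eq {M : Matrix n n ℂ} (hM : M.IsHermitian) (t : ℝ) :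
    M + (t : ℂ) • 1 = cfc (fun s : ℝ => s + t) M := by
  rw [cfc_add (a := M) (f := fun s : ℝ => s) (g := fun _ : ℝ => t) (hf := contOn _ M)
    (hg := contOn _ M),
    cfc_id' ℝ M hM.isSelfAdjoint, cfc_const t M hM.isSelfAdjoint,
    Algebra.algebraMap_eq_smul_one, real_smul_matrix]

lemma shift_posDef {M : Matrix n n ℂ} (hM : M.PosDef) {t : ℝ} (ht : 0 < t) :
    (M + (t : ℂ) • 1).PosDef := by
  rw [shift_eq hM.1 t]
  exact cfc_posDef hM fun j => by have := hM.eigenvalues_pos j; linarith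

lemma shift_inv {M : Matrix n n ℂ} (hM : M.PosDef) {t : ℝ} (ht : 0 < t) :
    (M + (t : ℂ) • 1)⁻¹ = cfc (fun s : ℝ => (s + t)⁻¹) M := by
  refine Matrix.inv_eq_right_inv ?_
  rw [shift_eq hM.1 t, ← cfc_mul (a := M) (hf := contOn _ M) (hg := contOn _ M)]
  have : cfc (fun s : ℝ => (s + t) * (s + t)⁻¹) M = cfc (fun _ : ℝ => (1 : ℝ)) M := by
    refine cfc_congr fun s hs => ?_
    rw [hM.1.spectrum_real_eq_range_eigenvalues] at hs
    obtain ⟨j, rfl⟩ := hs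
    have : (0 : ℝ) < hM.1.eigenvalues j + t := by
      have := hM.eigenvalues_pos j; linarith
    exact mul_inv_cancel₀ this.ne'
  rw [this, cfc_const_one ℝ M hM.1.isSelfAdjoint]

lemma rq_shift_inv {M : Matrix n n ℂ} (hM : M.PosDef) {t : ℝ} (ht : 0 < t) (x : n → ℂ) :
    rq ((M + (t : ℂ) • 1)⁻¹) x = ∑ j, (hM.1.eigenvalues j + t)⁻¹ * wv hM.1 x j := by
  rw [shift_inv hM ht, rq_cfc]


/-! ### scalar integral representation -/

noncomputable def Fq (p lam t : ℝ) : ℝ := t ^ (p - 1) * (lam * (lam + t)⁻¹)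

noncomputable def Jc (p : ℝ) : ℝ := ∫ t in Ioi (0 : ℝ), Fq p 1 t

lemma Fq_nonneg {p lam : ℝ} (hlam : 0 ≤ lam) {t : ℝ} (ht : 0 ≤ t) : 0 ≤ Fq p lam t := by
  unfold Fq
  have : 0 ≤ lam + t := by linarith
  positivity

lemma Fq_contOn {p lam : ℝ} (hlam : 0 < lam) : ContinuousOn (Fq p lam) (Ioi 0) := by
  unfold Fq
  refine ContinuousOn.mul ?_ (continuousOn_const.mul (ContinuousOn.inv₀
    (continuousOn_const.add continuousOn_id) fun t ht => by
      have : (0:ℝ) < t := ht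
      positivity))
  exact fun t ht => (Real.continuousAt_rpow_const t (p - 1)
    (Or.inl (ne_of_gt ht))).continuousWithinAt

lemma Fq_integrable {p : ℝ} (hp0 : 0 < p) (hp1 : p < 1) {lam : ℝ} (hlam : 0 < lam) :
    IntegrableOn (Fq p lam) (Ioi 0) := by
  have hmeas : ∀ s ⊆ Ioi (0:ℝ), MeasurableSet s → AEStronglyMeasurable (Fq p lam) (volume.restrict s) :=
    fun s hs hms => ((Fq_contOn hlam).mono hs).aestronglyMeasurable hms
  rw [← Ioc_union_Ioi_eq_Ioi (zero_le_one : (0:ℝ) ≤ 1)]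
  refine IntegrableOn.union ?_ ?_
  · -- on Ioc 0 1, dominated by t ^ (p-1)
    have base : IntegrableOn (fun t : ℝ => t ^ (p - 1)) (Ioc 0 1) := by
      rw [integrableOn_Ioc_iff_integrableOn_Ioo]
      exact (intervalIntegral.integrableOn_Ioo_rpow_iff zero_lt_one).mpr (by linarith)
    refine Integrable.mono base (hmeas _ Ioc_subset_Ioi_self measurableSet_Ioc) ?_
    rw [ae_restrict_iff' measurableSet_Ioc]
    refine Filter.Eventually.of_forall fun t ht => ?_
    have ht0 : (0:ℝ) < t := ht.1
    have h1 : lam * (lam + t)⁻¹ ≤ 1 := by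
      have hpos : (0:ℝ) < lam + t := by linarith
      have h5 : lam * (lam + t)⁻¹ ≤ (lam + t) * (lam + t)⁻¹ :=
        mul_le_mul_of_nonneg_right (by linarith) (inv_pos.mpr hpos).le
      rw [mul_inv_cancel₀ hpos.ne'] at h5
      exact h5
    rw [Real.norm_eq_abs, Real.norm_eq_abs, abs_of_nonneg (Fq_nonneg hlam.le ht0.le),
      abs_of_nonneg (Real.rpow_nonneg ht0.le _)]
    unfold Fq
    have h2 : (0:ℝ) ≤ t ^ (p-1) := Real.rpow_nonneg ht0.le _
    nlinarith [mul_pos hlam (inv_pos.mpr (by linarith : (0:ℝ) < lam + t))]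
  · -- on Ioi 1, dominated by lam * t ^ (p-2)
    have base : IntegrableOn (fun t : ℝ => lam * t ^ (p - 2)) (Ioi 1) :=
      (integrableOn_Ioi_rpow_of_lt (by linarith) zero_lt_one).const_mul lam
    refine Integrable.mono base (hmeas _ (Ioi_subset_Ioi zero_le_one) measurableSet_Ioi) ?_
    rw [ae_restrict_iff' measurableSet_Ioi]
    refine Filter.Eventually.of_forall fun t ht => ?_
    have ht1 : (1:ℝ) < t := ht
    have ht0 : (0:ℝ) < t := by linarith
    have key : Fq p lam t ≤ lam * t ^ (p - 2) := by
      unfold Fq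
      have h3 : (lam + t)⁻¹ ≤ t⁻¹ := by
        apply inv_anti₀ ht0
        linarith
      have h4 : t ^ (p-1) * t⁻¹ = t ^ (p-2) := by
        rw [← Real.rpow_neg_one t, ← Real.rpow_add ht0]
        ring_nf
      calc t ^ (p-1) * (lam * (lam+t)⁻¹) ≤ t ^ (p-1) * (lam * t⁻¹) := by
            have := Real.rpow_nonneg ht0.le (p-1)
            have := mul_le_mul_of_nonneg_left h3 hlam.le
            nlinarith
        _ = lam * t ^ (p-2) := by rw [← h4]; ring
    rw [Real.norm_eq_abs, Real.norm_eq_abs, abs_of_nonneg (Fq_nonneg hlam.le ht0.le),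
      abs_of_nonneg (by positivity : (0:ℝ) ≤ lam * t ^ (p-2))]
    exact key

lemma Jc_pos {p : ℝ} (hp0 : 0 < p) (hp1 : p < 1) : 0 < Jc p := by
  have hint : IntegrableOn (Fq p 1) (Ioi 0) := Fq_integrable hp0 hp1 zero_lt_one
  have h1 : ∫ t in Ioc (0:ℝ) 1, (1/4 : ℝ) ≤ ∫ t in Ioc (0:ℝ) 1, Fq p 1 t := by
    refine setIntegral_mono_on (integrableOn_const ?_)
      (hint.mono_set Ioc_subset_Ioi_self) measurableSet_Ioc fun t ht => ?_
    · rw [Real.volume_Ioc]; norm_num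
    · have ht0 := ht.1
      have ht1 := ht.2
      unfold Fq
      have hh : (1:ℝ) ≤ t ^ (p - 1) := by
        have hh' : t ^ (0:ℝ) ≤ t ^ (p - 1) :=
          Real.rpow_le_rpow_of_exponent_ge ht0 ht1 (by linarith)
        rwa [Real.rpow_zero] at hh'
      have h2 : (1/2 : ℝ) ≤ (1 + t)⁻¹ := by
        have hpos : (0:ℝ) < 1 + t := by linarith
        have := mul_le_mul_of_nonneg_right (show (1:ℝ) + t ≤ 2 by linarith)
          (inv_pos.mpr hpos).le
        rw [mul_inv_cancel₀ hpos.ne'] at this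
        linarith [(inv_pos.mpr hpos).le]
      have h2' : (1/2 : ℝ) ≤ 1 * (1 + t)⁻¹ := by
        rw [one_mul]
        have hpos : (0:ℝ) < 1 + t := by linarith
        have a1 : (1+t) * (1/2 : ℝ) ≤ (1+t) * (1+t)⁻¹ := by
          rw [mul_inv_cancel₀ hpos.ne']; linarith
        have a2 := le_of_mul_le_mul_left a1 hpos
        linarith
      nlinarith [inv_pos.mpr (show (0:ℝ) < 1 + t by linarith)]
  have h2 : ∫ t in Ioc (0:ℝ) 1, Fq p 1 t ≤ Jc p := by
    refine setIntegral_mono_set hint ?_ (HasSubset.Subset.eventuallyLE Ioc_subset_Ioi_self)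
    refine (ae_restrict_iff' measurableSet_Ioi).mpr
      (Filter.Eventually.of_forall fun t ht => ?_)
    simpa using Fq_nonneg zero_le_one (le_of_lt ht)
  have h3 : ∫ t in Ioc (0:ℝ) 1, (1/4:ℝ) = 1/4 := by
    rw [setIntegral_const, Real.volume_real_Ioc]
    norm_num
  linarith

lemma Fq_integral {p : ℝ} (hp0 : 0 < p) (hp1 : p < 1) {lam : ℝ} (hlam : 0 < lam) :
    ∫ t in Ioi (0:ℝ), Fq p lam t = lam ^ p * Jc p := by
  have hcv := integral_comp_mul_left_Ioi (Fq p lam) 0 hlam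
  rw [mul_zero] at hcv
  have hpt : ∫ u in Ioi (0:ℝ), Fq p lam (lam * u) = lam ^ (p-1) * Jc p := by
    rw [show lam ^ (p-1) * Jc p = ∫ u in Ioi (0:ℝ), lam ^ (p-1) * Fq p 1 u from
      (integral_const_mul _ _).symm]
    refine setIntegral_congr_fun measurableSet_Ioi fun u hu => ?_
    have hu0 : (0:ℝ) < u := hu
    unfold Fq
    rw [Real.mul_rpow hlam.le hu0.le]
    have : lam + lam * u = lam * (1 + u) := by ring
    rw [this, mul_inv, one_mul]
    have h1u : (0:ℝ) < 1 + u := by linarith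
    field_simp
  rw [hpt] at hcv
  rw [smul_eq_mul] at hcv
  have : lam * (lam ^ (p-1) * Jc p) = lam ^ p * Jc p := by
    rw [show lam * (lam ^ (p-1) * Jc p) = (lam ^ (p-1) * lam) * Jc p by ring,
      ← Real.rpow_add_one hlam.ne' (p-1)]
    ring_nf
  rw [← this, hcv]
  field_simp


/-! ### positive unital maps -/

section Phi
variable {k : Type*} [Fintype k] [DecidableEq k]
variable (Φ : Matrix k k ℂ →ₗ[ℂ] Matrix n n ℂ)

lemma phi_mono (hΦpos : ∀ A : Matrix k k ℂ, A.PosSemidef → (Φ A).PosSemidef)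
    {Y Z : Matrix k k ℂ} (h : (Y - Z).PosSemidef) : (Φ Y - Φ Z).PosSemidef := by
  rw [← map_sub]
  exact hΦpos _ h

lemma sub_smul_one_eq {X : Matrix k k ℂ} (hX : X.IsHermitian) (ε : ℝ) :
    X - (ε : ℂ) • 1 = cfc (fun s : ℝ => s - ε) X := by
  rw [cfc_sub (a := X) (f := fun s : ℝ => s) (g := fun _ : ℝ => ε) (hf := contOn _ X)
    (hg := contOn _ X), cfc_id' ℝ X hX.isSelfAdjoint, cfc_const ε X hX.isSelfAdjoint,
    Algebra.algebraMap_eq_smul_one, real_smul_matrix]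

lemma phi_posDef [Nonempty k] (hΦpos : ∀ A : Matrix k k ℂ, A.PosSemidef → (Φ A).PosSemidef)
    (hΦunital : Φ 1 = 1) {X : Matrix k k ℂ} (hX : X.PosDef) : (Φ X).PosDef := by
  set ε := Finset.univ.inf' Finset.univ_nonempty hX.1.eigenvalues with hεdef
  have hε : 0 < ε := by
    rw [hεdef, Finset.lt_inf'_iff]
    exact fun i _ => hX.eigenvalues_pos i
  have hle : (X - (ε : ℂ) • 1).PosSemidef := by
    rw [sub_smul_one_eq hX.1 ε]
    refine cfc_posSemidef hX.1 fun j => ?_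
    have : ε ≤ hX.1.eigenvalues j := Finset.inf'_le _ (Finset.mem_univ j)
    linarith
  have hone : Φ ((ε : ℂ) • 1) = (ε : ℂ) • 1 := by
    rw [_root_.map_smul, hΦunital]
  have hPSD2 : (Φ X - (ε : ℂ) • 1).PosSemidef := by
    rw [← hone, ← map_sub]
    exact hΦpos _ hle
  have : Φ X = (ε : ℂ) • 1 + (Φ X - (ε : ℂ) • 1) := by abel
  rw [this]
  exact (smul_one_posDef hε).add_posSemidef hPSD2

end Phi


/-! ### operator concavity of rpow -/

section Concave

variable {p : ℝ} {A B : Matrix n n ℂ} {a b : ℝ}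

lemma mix_posDef (hA : A.PosDef) (hB : B.PosDef) (ha : 0 ≤ a) (hb : 0 ≤ b)
    (hab : a + b = 1) : ((a : ℂ) • A + (b : ℂ) • B).PosDef := by
  refine posDef_of_rq ((herm_smul a hA.1).add (herm_smul b hB.1)) fun x hx => ?_
  rw [rq_add, rq_smul, rq_smul]
  have h1 := rq_pos hA hx
  have h2 := rq_pos hB hx
  rcases eq_or_lt_of_le ha with h | h
  · have hb1 : b = 1 := by linarith
    rw [← h, hb1]; linarith
  · nlinarith

lemma spectral_int (hp0 : 0 < p) (hp1 : p < 1) {X : Matrix n n ℂ} (hX : X.PosDef) (x : n → ℂ) :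
    ∑ j, hX.1.eigenvalues j ^ p * wv hX.1 x j
      = (Jc p)⁻¹ * ∫ t in Ioi (0:ℝ), ∑ j, wv hX.1 x j * Fq p (hX.1.eigenvalues j) t := by
  have hint : ∀ j : n, Integrable (fun t => wv hX.1 x j * Fq p (hX.1.eigenvalues j) t)
      (volume.restrict (Ioi (0:ℝ))) :=
    fun j => (Fq_integrable hp0 hp1 (hX.eigenvalues_pos j)).const_mul _
  rw [integral_finset_sum _ fun j _ => hint j]
  have : ∀ j : n, ∫ t in Ioi (0:ℝ), wv hX.1 x j * Fq p (hX.1.eigenvalues j) t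
      = wv hX.1 x j * (hX.1.eigenvalues j ^ p * Jc p) := by
    intro j
    rw [integral_const_mul, Fq_integral hp0 hp1 (hX.eigenvalues_pos j)]
  simp only [this]
  have hJ := Jc_pos hp0 hp1
  rw [Finset.mul_sum]
  congr 1; ext j
  field_simp

lemma g_int (hp0 : 0 < p) (hp1 : p < 1) {X : Matrix n n ℂ} (hX : X.PosDef) (x : n → ℂ) :
    IntegrableOn (fun t => ∑ j, wv hX.1 x j * Fq p (hX.1.eigenvalues j) t) (Ioi (0:ℝ)) :=
  integrable_finset_sum _ fun j _ =>
    (Fq_integrable hp0 hp1 (hX.eigenvalues_pos j)).const_mul _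

lemma g_eq {X : Matrix n n ℂ} (hX : X.PosDef) (x : n → ℂ) {t : ℝ} (ht : 0 < t) :
    ∑ j, wv hX.1 x j * Fq p (hX.1.eigenvalues j) t
      = t ^ (p - 1) * ((∑ j, ‖x j‖ ^ 2) - t * rq ((X + (t : ℂ) • 1)⁻¹) x) := by
  rw [rq_shift_inv hX ht, ← sum_wv hX.1 x, Finset.mul_sum, ← Finset.sum_sub_distrib,
    Finset.mul_sum]
  refine Finset.sum_congr rfl fun j _ => ?_
  have hl := hX.eigenvalues_pos j
  have hlt : (0:ℝ) < hX.1.eigenvalues j + t := by linarith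
  unfold Fq
  field_simp
  ring

lemma shift_mix_eq (hab : a + b = 1) (t : ℝ) :
    (a : ℂ) • (A + (t : ℂ) • 1) + (b : ℂ) • (B + (t : ℂ) • 1)
      = ((a : ℂ) • A + (b : ℂ) • B) + (t : ℂ) • 1 := by
  have hab' : (a : ℂ) + (b : ℂ) = 1 := by
    rw [← Complex.ofReal_add, hab, Complex.ofReal_one]
  rw [smul_add, smul_add, smul_smul, smul_smul]
  have : (a : ℂ) * t + (b : ℂ) * t = t := by rw [← add_mul, hab', one_mul]
  calc (a:ℂ) • A + ((a:ℂ) * t) • (1 : Matrix n n ℂ) + ((b:ℂ) • B + ((b:ℂ) * t) • 1)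
      = (a:ℂ) • A + (b:ℂ) • B + ((a:ℂ) * t + (b:ℂ) * t) • 1 := by
        rw [add_smul]; abel
    _ = (a:ℂ) • A + (b:ℂ) • B + (t:ℂ) • 1 := by rw [this]

lemma op_concave (hp0 : 0 < p) (hp1 : p < 1) (hA : A.PosDef) (hB : B.PosDef)
    (ha : 0 ≤ a) (hb : 0 ≤ b) (hab : a + b = 1) :
    (cfc (fun s : ℝ => s ^ p) ((a : ℂ) • A + (b : ℂ) • B)
      - ((a : ℂ) • cfc (fun s : ℝ => s ^ p) A + (b : ℂ) • cfc (fun s : ℝ => s ^ p) B)).PosSemidef := by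
  set M := (a : ℂ) • A + (b : ℂ) • B with hMdef
  have hM : M.PosDef := mix_posDef hA hB ha hb hab
  have hHerm : (cfc (fun s : ℝ => s ^ p) M
      - ((a : ℂ) • cfc (fun s : ℝ => s ^ p) A + (b : ℂ) • cfc (fun s : ℝ => s ^ p) B)).IsHermitian :=
    (isHermitian_of_sa (cfc_predicate _ M)).sub
      ((herm_smul a (isHermitian_of_sa (cfc_predicate _ A))).add
        (herm_smul b (isHermitian_of_sa (cfc_predicate _ B))))
  refine posSemidef_of_rq hHerm fun x => ?_
  rw [rq_sub, rq_add, rq_smul, rq_smul, rq_cfc hM.1, rq_cfc hA.1, rq_cfc hB.1]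
  have hJ := Jc_pos hp0 hp1
  -- pointwise inequality between the integrands
  have step3 : ∀ t ∈ Ioi (0:ℝ),
      a * (∑ j, wv hA.1 x j * Fq p (hA.1.eigenvalues j) t)
        + b * (∑ j, wv hB.1 x j * Fq p (hB.1.eigenvalues j) t)
      ≤ ∑ j, wv hM.1 x j * Fq p (hM.1.eigenvalues j) t := by
    intro t ht
    have ht0 : (0:ℝ) < t := ht
    have hPA : (A + (t : ℂ) • 1).PosDef := shift_posDef hA ht0
    have hPB : (B + (t : ℂ) • 1).PosDef := shift_posDef hB ht0
    have hPM : (M + (t : ℂ) • 1).PosDef := shift_posDef hM ht0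
    have hconv := inv_convex hPA hPB ha hb hab (shift_mix_eq hab t).symm hPM
    have hkey : 0 ≤ a * rq ((A + (t:ℂ) • 1)⁻¹) x + b * rq ((B + (t:ℂ) • 1)⁻¹) x
        - rq ((M + (t:ℂ) • 1)⁻¹) x := by
      have := rq_nonneg hconv x
      rwa [rq_sub, rq_add, rq_smul, rq_smul] at this
    rw [g_eq hA x ht0, g_eq hB x ht0, g_eq hM x ht0]
    set c := ∑ j, ‖x j‖ ^ 2
    set RA := rq ((A + (t:ℂ) • 1)⁻¹) x
    set RB := rq ((B + (t:ℂ) • 1)⁻¹) x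
    set RM := rq ((M + (t:ℂ) • 1)⁻¹) x
    have hT : (0:ℝ) ≤ t ^ (p - 1) := Real.rpow_nonneg ht0.le _
    have expand : t ^ (p-1) * (c - t * RM)
        - (a * (t ^ (p-1) * (c - t * RA)) + b * (t ^ (p-1) * (c - t * RB)))
        = t ^ (p-1) * t * (a * RA + b * RB - RM) + (1 - (a + b)) * (t ^ (p-1)) * c := by
      ring
    rw [hab] at expand
    have hprod : 0 ≤ t ^ (p-1) * t * (a * RA + b * RB - RM) :=
      mul_nonneg (mul_nonneg hT ht0.le) hkey
    linarith
  -- combine the integrals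
  have hintA := g_int hp0 hp1 hA x
  have hintB := g_int hp0 hp1 hB x
  have hintM := g_int hp0 hp1 hM x
  have hle : ∫ t in Ioi (0:ℝ),
      (a * (∑ j, wv hA.1 x j * Fq p (hA.1.eigenvalues j) t)
        + b * (∑ j, wv hB.1 x j * Fq p (hB.1.eigenvalues j) t))
      ≤ ∫ t in Ioi (0:ℝ), ∑ j, wv hM.1 x j * Fq p (hM.1.eigenvalues j) t :=
    setIntegral_mono_on ((hintA.const_mul a).add (hintB.const_mul b)) hintM
      measurableSet_Ioi step3
  have heq : ∫ t in Ioi (0:ℝ),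
      (a * (∑ j, wv hA.1 x j * Fq p (hA.1.eigenvalues j) t)
        + b * (∑ j, wv hB.1 x j * Fq p (hB.1.eigenvalues j) t))
      = a * (∫ t in Ioi (0:ℝ), ∑ j, wv hA.1 x j * Fq p (hA.1.eigenvalues j) t)
        + b * (∫ t in Ioi (0:ℝ), ∑ j, wv hB.1 x j * Fq p (hB.1.eigenvalues j) t) := by
    rw [integral_add (hintA.const_mul a) (hintB.const_mul b), integral_const_mul,
      integral_const_mul]
  rw [heq] at hle
  rw [spectral_int hp0 hp1 hM x, spectral_int hp0 hp1 hA x, spectral_int hp0 hp1 hB x]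
  have hJinv : (0:ℝ) ≤ (Jc p)⁻¹ := (inv_pos.mpr hJ).le
  nlinarith [hle]

lemma rpow_one_cfc {X : Matrix n n ℂ} (hX : X.IsHermitian) :
    cfc (fun s : ℝ => s ^ (1:ℝ)) X = X := by
  rw [cfc_congr (fun s _ => Real.rpow_one s), cfc_id' ℝ X hX.isSelfAdjoint]

lemma op_concave' (hp0 : 0 < p) (hp1 : p ≤ 1) (hA : A.PosDef) (hB : B.PosDef)
    (ha : 0 ≤ a) (hb : 0 ≤ b) (hab : a + b = 1) :
    (cfc (fun s : ℝ => s ^ p) ((a : ℂ) • A + (b : ℂ) • B)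
      - ((a : ℂ) • cfc (fun s : ℝ => s ^ p) A + (b : ℂ) • cfc (fun s : ℝ => s ^ p) B)).PosSemidef := by
  rcases eq_or_lt_of_le hp1 with h | h
  · subst h
    have hM : ((a : ℂ) • A + (b : ℂ) • B).PosDef := mix_posDef hA hB ha hb hab
    rw [rpow_one_cfc hM.1, rpow_one_cfc hA.1, rpow_one_cfc hB.1, sub_self]
    exact Matrix.PosSemidef.zero
  · exact op_concave hp0 h hA hB ha hb hab

end Concave


/-! ### scalar convexity and doubly stochastic facts -/

lemma rpow_convexOn_of_nonpos {c : ℝ} (hc : c ≤ 0) :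
    ConvexOn ℝ (Ioi 0) (fun s : ℝ => s ^ c) := by
  have hderiv : ∀ t ∈ Ioi (0:ℝ), HasDerivAt (fun s : ℝ => s ^ c) (c * t ^ (c - 1)) t :=
    fun t ht => Real.hasDerivAt_rpow_const (Or.inl (ne_of_gt ht))
  have hderiv2 : ∀ t ∈ Ioi (0:ℝ),
      HasDerivAt (fun s : ℝ => c * s ^ (c - 1)) (c * ((c - 1) * t ^ (c - 1 - 1))) t :=
    fun t ht => (Real.hasDerivAt_rpow_const (Or.inl (ne_of_gt ht))).const_mul c
  have hmem : ∀ t ∈ Ioi (0:ℝ), Ioi (0:ℝ) ∈ nhds t := fun t ht => Ioi_mem_nhds ht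
  have hdf : ∀ t ∈ Ioi (0:ℝ), deriv (fun s : ℝ => s ^ c) t = c * t ^ (c - 1) :=
    fun t ht => (hderiv t ht).deriv
  have hev : ∀ t ∈ Ioi (0:ℝ), deriv (fun s : ℝ => s ^ c) =ᶠ[nhds t] fun s => c * s ^ (c - 1) :=
    fun t ht => Filter.eventually_of_mem (hmem t ht) (fun y hy => hdf y hy)
  refine convexOn_of_deriv2_nonneg (convex_Ioi 0) ?_ ?_ ?_ ?_
  · exact fun t ht => ((hderiv t ht).continuousAt).continuousWithinAt
  · intro t ht
    rw [interior_Ioi] at ht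
    exact ((hderiv t ht).differentiableAt).differentiableWithinAt
  · intro t ht
    rw [interior_Ioi] at ht
    have : DifferentiableAt ℝ (fun s : ℝ => c * s ^ (c - 1)) t :=
      (hderiv2 t ht).differentiableAt
    exact (this.congr_of_eventuallyEq (hev t ht)).differentiableWithinAt
  · intro t ht
    rw [interior_Ioi] at ht
    have h1 : deriv (deriv (fun s : ℝ => s ^ c)) t
        = deriv (fun s : ℝ => c * s ^ (c - 1)) t := (hev t ht).deriv_eq
    have h2 : deriv (fun s : ℝ => c * s ^ (c - 1)) t = c * ((c - 1) * t ^ (c - 1 - 1)) :=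
      (hderiv2 t ht).deriv
    have h3 : (0:ℝ) ≤ t ^ (c - 1 - 1) := Real.rpow_nonneg (le_of_lt ht) _
    simp only [Function.iterate_succ, Function.iterate_zero, Function.comp_apply, id_eq]
    rw [h1, h2]
    have h4 : 0 ≤ c * (c - 1) := mul_nonneg_of_nonpos_of_nonpos hc (by linarith)
    nlinarith

lemma conj_mul_self_eq_norm (z : ℂ) : z * (starRingEnd ℂ) z = ((‖z‖ ^ 2 : ℝ) : ℂ) := by
  rw [← Complex.normSq_eq_norm_sq, Complex.mul_conj]

lemma row_sum_norm_one {Q : Matrix n n ℂ} (hQ : Q * Qᴴ = 1) (j : n) :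
    ∑ i, ‖Q j i‖ ^ 2 = 1 := by
  have h := congrArg (fun M : Matrix n n ℂ => M j j) hQ
  simp only [Matrix.mul_apply, Matrix.one_apply_eq, Matrix.conjTranspose_apply] at h
  have h2 : ∑ i, Q j i * (starRingEnd ℂ) (Q j i) = ((∑ i, ‖Q j i‖ ^ 2 : ℝ) : ℂ) := by
    rw [Complex.ofReal_sum]
    exact Finset.sum_congr rfl fun i _ => conj_mul_self_eq_norm _
  rw [show (∑ x, Q j x * star (Q j x)) = ∑ i, Q j i * (starRingEnd ℂ) (Q j i) from rfl, h2] at h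
  exact_mod_cast h

lemma col_sum_norm_one {V : Matrix n n ℂ} (hV : Vᴴ * V = 1) (i : n) :
    ∑ m, ‖V m i‖ ^ 2 = 1 := by
  have hQ : Vᴴ * (Vᴴ)ᴴ = 1 := by rwa [conjTranspose_conjTranspose]
  have := row_sum_norm_one hQ i
  simpa [Matrix.conjTranspose_apply] using this


lemma wv_entry {X : Matrix n n ℂ} (hX : X.IsHermitian) (V : Matrix n n ℂ) (i j : n) :
    wv hX (fun m => V m i) j
      = ‖(((hX.eigenvectorUnitary : Matrix n n ℂ))ᴴ * V) j i‖ ^ 2 := by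
  unfold wv
  have : ((hX.eigenvectorUnitary : Matrix n n ℂ)ᴴ *ᵥ fun m => V m i) j
      = (((hX.eigenvectorUnitary : Matrix n n ℂ))ᴴ * V) j i := by
    simp [Matrix.mulVec, Matrix.mul_apply, dotProduct]
  rw [this]

lemma wv_col_sum {X : Matrix n n ℂ} (hX : X.IsHermitian) {V : Matrix n n ℂ}
    (hV : V ∈ Matrix.unitaryGroup n ℂ) (j : n) :
    ∑ i, wv hX (fun m => V m i) j = 1 := by
  set W := (hX.eigenvectorUnitary : Matrix n n ℂ) with hWdef
  have hW : W ∈ Matrix.unitaryGroup n ℂ := hX.eigenvectorUnitary.2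
  have hV1 : V * Vᴴ = 1 := by
    rw [← star_eq_conjTranspose]; exact Unitary.mul_star_self_of_mem hV
  have hWW : Wᴴ * W = 1 := by
    rw [← star_eq_conjTranspose]; exact Unitary.star_mul_self_of_mem hW
  have hQ : (Wᴴ * V) * (Wᴴ * V)ᴴ = 1 := by
    rw [conjTranspose_mul, conjTranspose_conjTranspose]
    calc Wᴴ * V * (Vᴴ * W) = Wᴴ * (V * Vᴴ) * W := by
          simp only [Matrix.mul_assoc]
      _ = Wᴴ * W := by rw [hV1, Matrix.mul_one]
      _ = 1 := hWW
  calc ∑ i, wv hX (fun m => V m i) j = ∑ i, ‖(Wᴴ * V) j i‖ ^ 2 :=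
        Finset.sum_congr rfl fun i _ => wv_entry hX V i j
    _ = 1 := row_sum_norm_one hQ j

/-- Peierls-type inequality. -/
lemma peierls {X : Matrix n n ℂ} (hX : X.PosDef) {V : Matrix n n ℂ}
    (hV : V ∈ Matrix.unitaryGroup n ℂ) {f : ℝ → ℝ} (hconv : ConvexOn ℝ (Ioi 0) f) :
    ∑ i, f (rq X (fun m => V m i)) ≤ ∑ j, f (hX.1.eigenvalues j) := by
  have hVV : Vᴴ * V = 1 := by
    rw [← star_eq_conjTranspose]; exact Unitary.star_mul_self_of_mem hV
  have per_i : ∀ i, f (rq X (fun m => V m i))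
      ≤ ∑ j, wv hX.1 (fun m => V m i) j * f (hX.1.eigenvalues j) := by
    intro i
    have hsum1 : ∑ j, wv hX.1 (fun m => V m i) j = 1 := by
      rw [sum_wv]
      exact col_sum_norm_one hVV i
    have hrq : rq X (fun m => V m i)
        = ∑ j, wv hX.1 (fun m => V m i) j • hX.1.eigenvalues j := by
      rw [rq_self hX.1]
      exact Finset.sum_congr rfl fun j _ => by rw [smul_eq_mul]; ring
    rw [hrq]
    have := hconv.map_sum_le (fun j _ => wv_nonneg hX.1 _ j) hsum1
      (fun j _ => hX.eigenvalues_pos j)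
    simpa [smul_eq_mul] using this
  calc ∑ i, f (rq X (fun m => V m i))
      ≤ ∑ i, ∑ j, wv hX.1 (fun m => V m i) j * f (hX.1.eigenvalues j) :=
        Finset.sum_le_sum fun i _ => per_i i
    _ = ∑ j, (∑ i, wv hX.1 (fun m => V m i) j) * f (hX.1.eigenvalues j) := by
        rw [Finset.sum_comm]
        exact Finset.sum_congr rfl fun j _ => (Finset.sum_mul _ _ _).symm
    _ = ∑ j, f (hX.1.eigenvalues j) := by
        refine Finset.sum_congr rfl fun j _ => ?_
        rw [wv_col_sum hX.1 hV j, one_mul]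

end TPaux


open TPaux in
theorem trace_phi_neg_inv_pow_convex {k n : Type*} [Fintype k] [DecidableEq k]
    [Fintype n] [DecidableEq n]
    (Φ : Matrix k k ℂ →ₗ[ℂ] Matrix n n ℂ)
    (hΦpos : ∀ A : Matrix k k ℂ, A.PosSemidef → (Φ A).PosSemidef)
    (hΦunital : Φ 1 = 1)
    (p : ℝ) (hp0 : 0 < p) (hp1 : p ≤ 1)
    (A B : Matrix k k ℂ) (hA : A.PosDef) (hB : B.PosDef)
    (l : ℝ) (hl0 : 0 ≤ l) (hl1 : l ≤ 1) :
    (mpow (Φ (mpow ((1 - l) • A + l • B) p)) (-(1/p))).trace.re ≤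
      (1 - l) * (mpow (Φ (mpow A p)) (-(1/p))).trace.re
        + l * (mpow (Φ (mpow B p)) (-(1/p))).trace.re := by
  rcases isEmpty_or_nonempty k with hk | hk
  · have hAB : ((1 - l) • A + l • B : Matrix k k ℂ) = A := by
      ext i j; exact isEmptyElim i
    have hBA : B = A := by ext i j; exact isEmptyElim i
    rw [hAB, hBA]
    nlinarith [le_refl (mpow (Φ (mpow A p)) (-(1/p))).trace.re]
  rcases isEmpty_or_nonempty n with hn | hn
  · simp [Matrix.trace]
  have ha : 0 ≤ 1 - l := by linarith
  have hb : 0 ≤ l := hl0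
  have hab : (1 - l) + l = 1 := by ring
  have hsm : (1 - l) • A + l • B = (((1 - l : ℝ) : ℂ) • A + ((l : ℝ) : ℂ) • B) := by
    rw [real_smul_matrix, real_smul_matrix]
  rw [hsm]
  set M := (((1 - l : ℝ) : ℂ) • A + ((l : ℝ) : ℂ) • B) with hMdef
  have hM : M.PosDef := mix_posDef hA hB ha hb hab
  have hMp : (mpow M p).PosDef :=
    cfc_posDef hM fun j => Real.rpow_pos_of_pos (hM.eigenvalues_pos j) p
  have hAp : (mpow A p).PosDef :=
    cfc_posDef hA fun j => Real.rpow_pos_of_pos (hA.eigenvalues_pos j) p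
  have hBp : (mpow B p).PosDef :=
    cfc_posDef hB fun j => Real.rpow_pos_of_pos (hB.eigenvalues_pos j) p
  have hXM : (Φ (mpow M p)).PosDef := phi_posDef Φ hΦpos hΦunital hMp
  have hXA : (Φ (mpow A p)).PosDef := phi_posDef Φ hΦpos hΦunital hAp
  have hXB : (Φ (mpow B p)).PosDef := phi_posDef Φ hΦpos hΦunital hBp
  have hcomp : (Φ (mpow M p)
      - (((1 - l : ℝ) : ℂ) • Φ (mpow A p) + ((l : ℝ) : ℂ) • Φ (mpow B p))).PosSemidef := by
    have h1 := op_concave' hp0 hp1 hA hB ha hb hab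
    have h2 := hΦpos _ h1
    rw [map_sub, map_add, _root_.map_smul, _root_.map_smul] at h2
    exact h2
  set f := fun s : ℝ => s ^ (-(1/p)) with hfdef
  have hc : -(1/p) ≤ 0 := by
    have : 0 < 1/p := by positivity
    linarith
  have hconv := rpow_convexOn_of_nonpos hc
  have hLHS : (mpow (Φ (mpow M p)) (-(1/p))).trace.re = ∑ i, f (hXM.1.eigenvalues i) :=
    trace_cfc_re hXM.1 f
  have hRA : (mpow (Φ (mpow A p)) (-(1/p))).trace.re = ∑ i, f (hXA.1.eigenvalues i) :=
    trace_cfc_re hXA.1 f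
  have hRB : (mpow (Φ (mpow B p)) (-(1/p))).trace.re = ∑ i, f (hXB.1.eigenvalues i) :=
    trace_cfc_re hXB.1 f
  rw [hLHS, hRA, hRB]
  set V := (hXM.1.eigenvectorUnitary : Matrix n n ℂ) with hVdef
  have hVmem : V ∈ Matrix.unitaryGroup n ℂ := hXM.1.eigenvectorUnitary.2
  have hVV : Vᴴ * V = 1 := by
    rw [← star_eq_conjTranspose]; exact Unitary.star_mul_self_of_mem hVmem
  have hvnorm : ∀ i, ∑ m, ‖V m i‖ ^ 2 = 1 := fun i => col_sum_norm_one hVV i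
  have hvne : ∀ i, (fun m => V m i) ≠ 0 := by
    intro i h
    have h1 := hvnorm i
    have h2 : ∀ m, V m i = 0 := fun m => congrFun h m
    simp only [h2] at h1
    simp at h1
  have hmu : ∀ i, rq (Φ (mpow M p)) (fun m => V m i) = hXM.1.eigenvalues i := by
    intro i
    have hcol : (fun m => V m i)
        = (WithLp.equiv 2 _) (hXM.1.eigenvectorBasis i) := by
      funext m; exact hXM.1.eigenvectorUnitary_apply m i
    have hmv : (Φ (mpow M p)) *ᵥ (fun m => V m i)
        = hXM.1.eigenvalues i • (fun m => V m i) := by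
      rw [hcol]; exact hXM.1.mulVec_eigenvectorBasis i
    rw [rq, hmv, dotProduct_smul, Complex.smul_re, dot_star_self, hvnorm i]
    simp
  have hmid : ∀ i, (1 - l) * rq (Φ (mpow A p)) (fun m => V m i)
      + l * rq (Φ (mpow B p)) (fun m => V m i) ≤ hXM.1.eigenvalues i := by
    intro i
    have h0 := rq_nonneg hcomp (fun m => V m i)
    rw [rq_sub, rq_add, rq_smul, rq_smul, hmu i] at h0
    linarith
  have haA : ∀ i, 0 < rq (Φ (mpow A p)) (fun m => V m i) := fun i => rq_pos hXA (hvne i)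
  have haB : ∀ i, 0 < rq (Φ (mpow B p)) (fun m => V m i) := fun i => rq_pos hXB (hvne i)
  have hper : ∀ i, f (hXM.1.eigenvalues i)
      ≤ (1 - l) * f (rq (Φ (mpow A p)) (fun m => V m i))
        + l * f (rq (Φ (mpow B p)) (fun m => V m i)) := by
    intro i
    have hposc : 0 < (1 - l) * rq (Φ (mpow A p)) (fun m => V m i)
        + l * rq (Φ (mpow B p)) (fun m => V m i) := by
      rcases eq_or_lt_of_le ha with h | h
      · have hb1 : l = 1 := by linarith
        rw [← h, hb1]
        have := haB i
        linarith
      · nlinarith [haA i, haB i]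
    have h1 : f (hXM.1.eigenvalues i)
        ≤ f ((1 - l) * rq (Φ (mpow A p)) (fun m => V m i)
            + l * rq (Φ (mpow B p)) (fun m => V m i)) :=
      Real.rpow_le_rpow_of_nonpos hposc (hmid i) hc
    have h2 := hconv.2 (Set.mem_Ioi.mpr (haA i)) (Set.mem_Ioi.mpr (haB i)) ha hb hab
    simp only [smul_eq_mul] at h2
    linarith
  calc ∑ i, f (hXM.1.eigenvalues i)
      ≤ ∑ i, ((1 - l) * f (rq (Φ (mpow A p)) (fun m => V m i))
          + l * f (rq (Φ (mpow B p)) (fun m => V m i))) :=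
        Finset.sum_le_sum fun i _ => hper i
    _ = (1 - l) * (∑ i, f (rq (Φ (mpow A p)) (fun m => V m i)))
        + l * (∑ i, f (rq (Φ (mpow B p)) (fun m => V m i))) := by
        rw [Finset.sum_add_distrib, Finset.mul_sum, Finset.mul_sum]
    _ ≤ (1 - l) * (∑ j, f (hXA.1.eigenvalues j)) + l * (∑ j, f (hXB.1.eigenvalues j)) := by
        have p1 := peierls hXA hVmem hconv
        have p2 := peierls hXB hVmem hconv
        exact add_le_add (mul_le_mul_of_nonneg_left p1 ha) (mul_le_mul_of_nonneg_left p2 hb)
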